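/- Let q ≥ 1 and 1 ≤ t ≤ d be integers, let u ∈ S_{d−t} be nonzero, and let w_0,…,w_q ∈ S_t be linearly independent over K. Then the element Σ_{i=0}^q (−1)^i (u·w_0 ∧ ⋯ ∧ \widehat{u·w_i} ∧ ⋯ ∧ u·w_q) ⊗ w_i is a nonzero element of ⋀^q S_d ⊗ S_t, where \widehat{u·w_i} denotes omission of the i-th wedge factor. -/
import Mathlib


open TensorProduct

noncomputable section

variable (K : Type*) [Field K]

/-- `S K n e` is the space of homogeneous polynomials of degree `e`
in the `n+1` variables `x_0, …, x_n`. -/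
abbrev S (n e : ℕ) : Submodule K (MvPolynomial (Fin (n + 1)) K) :=
  MvPolynomial.homogeneousSubmodule (Fin (n + 1)) K e

/-- The product of a homogeneous polynomial of degree `d` with one of degree `b`,
viewed as an element of degree `b + d`. -/
def mulSW {n d b : ℕ} (s : S K n d) (w : S K n b) : S K n (b + d) :=
  ⟨(s : MvPolynomial (Fin (n + 1)) K) * (w : MvPolynomial (Fin (n + 1)) K), by
    rw [MvPolynomial.mem_homogeneousSubmodule, Nat.add_comm b d]
    exact ((MvPolynomial.mem_homogeneousSubmodule _ _).1 s.2).mul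
      ((MvPolynomial.mem_homogeneousSubmodule _ _).1 w.2)⟩

/-- Identification of spaces of homogeneous polynomials of equal degrees. -/
def scast {n e₁ e₂ : ℕ} (h : e₁ = e₂) : S K n e₁ ≃ₗ[K] S K n e₂ :=
  LinearEquiv.ofEq _ _ (by rw [h])

/-- The increasing injection `Fin (a-1) → Fin a` omitting `j`. -/
def skipAt {a : ℕ} (j : Fin a) (i : Fin (a - 1)) : Fin a :=
  if (i : ℕ) < (j : ℕ) then ⟨i, by have := i.isLt; omega⟩
  else ⟨(i : ℕ) + 1, by have := i.isLt; omega⟩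

/-- The wedge `v 0 ∧ ⋯ ∧ v (a-1)` as an element of the `a`-th exterior power. -/
def wedge {M : Type*} [AddCommGroup M] [Module K M] (a : ℕ) (v : Fin a → M) :
    ⋀[K]^a M :=
  ⟨ExteriorAlgebra.ιMulti K a v, ExteriorAlgebra.ιMulti_range K a ⟨v, rfl⟩⟩

/-- `IsKoszulMap K n d a b δ` says that `δ : ⋀^a S_d ⊗ S_b → ⋀^{a-1} S_d ⊗ S_{b+d}` is
the Koszul map, i.e. it satisfies
`δ((s_1 ∧ ⋯ ∧ s_a) ⊗ w) = Σ_j (−1)^{j−1} (s_1 ∧ ⋯ ∧ ŝ_j ∧ ⋯ ∧ s_a) ⊗ (s_j·w)`. -/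
def IsKoszulMap (n d a b : ℕ)
    (δ : ((⋀[K]^a (S K n d)) ⊗[K] (S K n b)) →ₗ[K]
         ((⋀[K]^(a - 1) (S K n d)) ⊗[K] (S K n (b + d)))) : Prop :=
  ∀ (s : Fin a → S K n d) (w : S K n b),
    δ (wedge K a s ⊗ₜ[K] w) =
      ∑ j : Fin a, ((-1 : K) ^ (j : ℕ)) •
        ((wedge K (a - 1) fun i => s (skipAt j i)) ⊗ₜ[K] mulSW K (s j) w)

/-- Exactness of the Veronese–Koszul complex at `(i, q)`:
`ker δ_{i,qd} = im δ_{i+1,(q−1)d}` inside `⋀^i S_d ⊗ S_{qd}`. -/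
def VKExact (n d i q : ℕ) : Prop :=
  ∀ (h : (q - 1) * d + d = q * d)
    (δ₁ : ((⋀[K]^i (S K n d)) ⊗[K] (S K n (q * d))) →ₗ[K]
          ((⋀[K]^(i - 1) (S K n d)) ⊗[K] (S K n (q * d + d))))
    (δ₂ : ((⋀[K]^(i + 1) (S K n d)) ⊗[K] (S K n ((q - 1) * d))) →ₗ[K]
          ((⋀[K]^i (S K n d)) ⊗[K] (S K n ((q - 1) * d + d)))),
    IsKoszulMap K n d i (q * d) δ₁ → IsKoszulMap K n d (i + 1) ((q - 1) * d) δ₂ →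
    LinearMap.ker δ₁ =
      LinearMap.range
        ((TensorProduct.congr (LinearEquiv.refl K (⋀[K]^i (S K n d)))
            (scast K h)).toLinearMap ∘ₗ δ₂)

end


-- dual family
theorem exists_dual_family {K V : Type*} [Field K] [AddCommGroup V] [Module K V]
    {ι : Type*} [DecidableEq ι] {v : ι → V} (hv : LinearIndependent K v) :
    ∃ f : ι → (V →ₗ[K] K), ∀ i j, f i (v j) = if i = j then 1 else 0 := by
  classical
  have : ∀ i : ι, ∃ g : V →ₗ[K] K,
      g ∘ₗ (Submodule.span K (Set.range v)).subtype
        = (Finsupp.lapply i) ∘ₗ (hv.repr : _ →ₗ[K] _) := fun i =>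
    LinearMap.exists_extend _
  choose f hf using this
  refine ⟨f, fun i j => ?_⟩
  have h1 : (f i) ((Submodule.span K (Set.range v)).subtype
      ⟨v j, Submodule.subset_span ⟨j, rfl⟩⟩) = (Finsupp.lapply i : (ι →₀ K) →ₗ[K] K) (hv.repr ⟨v j, Submodule.subset_span ⟨j, rfl⟩⟩) := by
    rw [← LinearMap.comp_apply, hf]; rfl
  have h2 : hv.repr ⟨v j, Submodule.subset_span ⟨j, rfl⟩⟩ = Finsupp.single j 1 :=
    hv.repr_eq_single j _ rfl
  simpa [h2, Finsupp.single_apply, eq_comm] using h1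

-- nonvanishing of ιMulti on linearly independent family
theorem iMulti_ne_zero {K V : Type*} [Field K] [AddCommGroup V] [Module K V]
    {m : ℕ} {v : Fin m → V} (hv : LinearIndependent K v) :
    ExteriorAlgebra.ιMulti K m v ≠ 0 := by
  classical
  obtain ⟨f, hf⟩ := exists_dual_family hv
  set φ : V →ₗ[K] (Fin m → K) := LinearMap.pi (fun i => f i)
  set F : V [⋀^Fin m]→ₗ[K] K := Matrix.detRowAlternating.compLinearMap φ
  set G : ∀ i : ℕ, V [⋀^Fin i]→ₗ[K] K := Function.update (fun _ => 0) m F with hG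
  intro h0
  have := congrArg (ExteriorAlgebra.liftAlternating G) h0
  rw [ExteriorAlgebra.liftAlternating_apply_ιMulti, map_zero] at this
  have hGm : G m = F := Function.update_self _ _ _
  rw [hGm] at this
  have hFv : F v = Matrix.det (1 : Matrix (Fin m) (Fin m) K) := by
    show Matrix.detRowAlternating (fun i : Fin m => φ (v i)) = _
    congr 1
    funext i j
    simp [φ, hf j i, Matrix.one_apply, eq_comm]
  rw [hFv] at this
  simp at this

theorem skipAt_injective {a : ℕ} (j : Fin a) : Function.Injective (skipAt j) := by
  intro i1 i2 h12
  unfold skipAt at h12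
  apply Fin.ext
  split_ifs at h12 <;> simp only [Fin.mk.injEq] at h12 <;> omega

set_option synthInstance.maxHeartbeats 1000000 in
set_option maxHeartbeats 1000000 in
/-- for `q ≥ 1`, `1 ≤ t ≤ d`, `u ∈ S_{d−t}` nonzero and `w_0, …, w_q ∈ S_t`
linearly independent, the element
`Σ_i (−1)^i (u·w_0 ∧ ⋯ ∧ \widehat{u·w_i} ∧ ⋯ ∧ u·w_q) ⊗ w_i` of `⋀^q S_d ⊗ S_t` is nonzero. -/
theorem stmt4 (K : Type*) [Field K] [CharZero K] (n : ℕ) (hn : 1 ≤ n) (d : ℕ) (hd : 1 ≤ d)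
    (q t : ℕ) (hq : 1 ≤ q) (ht1 : 1 ≤ t) (htd : t ≤ d)
    (u : S K n (d - t)) (hu : u ≠ 0)
    (w : Fin (q + 1) → S K n t) (hw : LinearIndependent K w) :
    (∑ i : Fin (q + 1), ((-1 : K) ^ (i : ℕ)) •
        ((wedge K q fun l =>
            scast K (show t + (d - t) = d by omega) (mulSW K u (w (skipAt i l)))) ⊗ₜ[K] w i))
      ≠ (0 : (⋀[K]^q (S K n d)) ⊗[K] (S K n t)) := by
  classical
  intro hcontr
  have hu' : (u : MvPolynomial (Fin (n + 1)) K) ≠ 0 := fun h0 => hu (Subtype.ext h0)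
  set hdt : t + (d - t) = d := by omega
  set μ : S K n t →ₗ[K] S K n d :=
    { toFun := fun x => scast K hdt (mulSW K u x)
      map_add' := by
        intro a b; apply Subtype.ext
        simp [scast, mulSW, mul_add]
      map_smul' := by
        intro c a; apply Subtype.ext
        simp [scast, mulSW, mul_smul_comm] } with hμ
  set v : Fin (q + 1) → S K n d := fun i => μ (w i) with hvdef
  have hμinj : LinearMap.ker μ = ⊥ := by
    rw [LinearMap.ker_eq_bot]
    intro a b hab
    apply Subtype.ext
    have hab' : (u : MvPolynomial (Fin (n + 1)) K) * a = (u : MvPolynomial (Fin (n + 1)) K) * b :=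
      congrArg Subtype.val hab
    exact mul_left_cancel₀ hu' hab'
  have hv : LinearIndependent K v := hw.map' μ hμinj
  obtain ⟨g, hg⟩ := exists_dual_family hw
  set F : ((⋀[K]^q (S K n d)) ⊗[K] (S K n t)) →ₗ[K] (⋀[K]^q (S K n d)) :=
    (TensorProduct.rid K _).toLinearMap ∘ₗ LinearMap.lTensor (⋀[K]^q (S K n d)) (g 0) with hF
  have h0 := congrArg F hcontr
  rw [map_sum, map_zero] at h0
  have hterm : ∀ i : Fin (q + 1),
      F (((-1 : K) ^ (i : ℕ)) • ((wedge K q fun l => v (skipAt i l)) ⊗ₜ[K] w i))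
        = ((-1 : K) ^ (i : ℕ)) • (g 0 (w i)) • (wedge K q fun l => v (skipAt i l)) := by
    intro i
    rw [map_smul, hF]
    simp [LinearMap.lTensor_tmul, TensorProduct.rid_tmul]
  have h0' : ∑ i : Fin (q + 1),
      ((-1 : K) ^ (i : ℕ)) • (g 0 (w i)) • (wedge K q fun l => v (skipAt i l)) = 0 := by
    rw [← h0]; exact Finset.sum_congr rfl fun i _ => (hterm i).symm
  rw [Fintype.sum_eq_single (0 : Fin (q + 1))
    (fun b hb => by rw [hg 0 b, if_neg (fun hc => hb hc.symm)]; simp)] at h0'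
  rw [hg 0 0, if_pos rfl] at h0'
  simp only [Fin.val_zero, pow_zero, one_smul] at h0'
  have hli : LinearIndependent K (fun l => v (skipAt (0 : Fin (q + 1)) l)) :=
    hv.comp _ (skipAt_injective (0 : Fin (q + 1)))
  exact iMulti_ne_zero hli (by simpa [wedge] using congrArg Subtype.val h0')
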